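/- Let D be the derivation on ℚ[t,u,v] with D(t) = tu², D(u) = u²v, D(v) = 4u³. Then for all n ≥ 0, D^n(t²u²) = (n+1)! t² Σ_{k=0}^{n} T(n,k) u^{2n+2−k} v^k, where T(n,k) = C(n,k)·C(n−k, ⌊(n−k)/2⌋). -/

import Mathlib

open Finset MvPolynomial

/-- `T(n,k) = C(n,k)·C(n−k,⌊(n−k)/2⌋)`, counting left factors of Motzkin paths of
length `n` with `k` horizontal steps. -/
def motzkinT (n k : ℕ) : ℕ := n.choose k * (n - k).choose ((n - k) / 2)

lemma motzkinT_eval (n k m h : ℕ) (h1 : n - k = m) (h2 : m / 2 = h) :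
    motzkinT n k = n.choose k * m.choose h := by
  subst h2; rw [motzkinT, h1]

lemma choose_cast (n k m : ℕ) (h1 : k ≤ n) (h2 : n - k = m) :
    ((n.choose k : ℚ)) = n.factorial / (k.factorial * m.factorial) := by
  subst h2; exact Nat.cast_choose ℚ h1

lemma fact_cast (a b : ℕ) (h : a = b + 1) : ((a.factorial : ℚ)) = a * b.factorial := by
  subst h; rw [Nat.factorial_succ]; push_cast; ring

lemma fact_nz (a : ℕ) : ((a.factorial : ℚ)) ≠ 0 := by
  exact_mod_cast a.factorial_ne_zero

lemma rec0 (n : ℕ) : ((n : ℚ) + 2) * motzkinT (n + 1) 0 = 2 * motzkinT n 0 + 4 * motzkinT n 1 := by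
  obtain ⟨a, rfl | rfl⟩ := Nat.even_or_odd' n
  · -- n = 2a
    rcases a with _ | b
    · norm_num [motzkinT]
    · -- n = 2b+2
      rw [show 2*(b+1) = 2*b+2 from by ring]
      rw [motzkinT_eval (2*b+2+1) 0 (2*b+3) (b+1) (by omega) (by omega),
          motzkinT_eval (2*b+2) 0 (2*b+2) (b+1) (by omega) (by omega),
          motzkinT_eval (2*b+2) 1 (2*b+1) b (by omega) (by omega)]
      push_cast
      rw [choose_cast (2*b+3) (b+1) (b+2) (by omega) (by omega),
          choose_cast (2*b+2) (b+1) (b+1) (by omega) (by omega),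
          choose_cast (2*b+1) b (b+1) (by omega) (by omega),
          choose_cast (2*b+2) 1 (2*b+1) (by omega) (by omega)]
      rw [fact_cast (2*b+3) (2*b+2) (by omega), fact_cast (2*b+2) (2*b+1) (by omega),
          fact_cast (2*b+1) (2*b) (by omega), fact_cast (b+2) (b+1) (by omega),
          fact_cast (b+1) b (by omega)]
      have h1 := fact_nz b
      have h2 := fact_nz (2*b)
      field_simp
      push_cast [Nat.choose_zero_right]
      ring
  · -- n = 2a+1
    rw [motzkinT_eval (2*a+1+1) 0 (2*a+2) (a+1) (by omega) (by omega),
        motzkinT_eval (2*a+1) 0 (2*a+1) a (by omega) (by omega),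
        motzkinT_eval (2*a+1) 1 (2*a) a (by omega) (by omega)]
    push_cast
    rw [choose_cast (2*a+2) (a+1) (a+1) (by omega) (by omega),
        choose_cast (2*a+1) a (a+1) (by omega) (by omega),
        choose_cast (2*a) a a (by omega) (by omega),
        choose_cast (2*a+1) 1 (2*a) (by omega) (by omega)]
    rw [fact_cast (2*a+2) (2*a+1) (by omega), fact_cast (2*a+1) (2*a) (by omega),
        fact_cast (a+1) a (by omega)]
    have h1 := fact_nz a
    have h2 := fact_nz (2*a)
    field_simp
    push_cast [Nat.choose_zero_right]
    ring

lemma recS (n k : ℕ) (hk : k ≤ n) :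
    ((n : ℚ) + 2) * motzkinT (n + 1) (k + 1)
      = ((2 * n + 2 - k : ℕ) : ℚ) * motzkinT n k + 2 * motzkinT n (k + 1)
        + 4 * ((k : ℚ) + 2) * motzkinT n (k + 2) := by
  obtain ⟨m, rfl⟩ : ∃ m, n = k + m := ⟨n - k, by omega⟩
  clear hk
  rcases m with _ | m
  · -- m = 0
    simp only [show k + 0 = k from by omega, show 2*k+2-k = k+2 from by omega]
    simp [motzkinT, Nat.choose_eq_zero_of_lt]
  rcases m with _ | m
  · -- m = 1
    simp only [show k + (0+1) = k + 1 from by omega,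
      show 2*(k+1)+2-k = k+4 from by omega]
    rw [motzkinT_eval (k+1+1) (k+1) 1 0 (by omega) (by omega),
        motzkinT_eval (k+1) k 1 0 (by omega) (by omega),
        motzkinT_eval (k+1) (k+1) 0 0 (by omega) (by omega),
        motzkinT_eval (k+1) (k+2) 0 0 (by omega) (by omega)]
    simp [Nat.choose_succ_self_right, Nat.choose_eq_zero_of_lt]
    ring
  obtain ⟨b, rfl | rfl⟩ := Nat.even_or_odd' m
  · -- m = 2b+2
    simp only [show k + (2*b+1+1) = k+2*b+2 from by omega,
      show 2*(k+2*b+2)+2-k = k+4*b+6 from by omega]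
    rw [motzkinT_eval (k+2*b+2+1) (k+1) (2*b+2) (b+1) (by omega) (by omega),
        motzkinT_eval (k+2*b+2) k (2*b+2) (b+1) (by omega) (by omega),
        motzkinT_eval (k+2*b+2) (k+1) (2*b+1) b (by omega) (by omega),
        motzkinT_eval (k+2*b+2) (k+2) (2*b) b (by omega) (by omega)]
    push_cast
    rw [choose_cast (k+2*b+2+1) (k+1) (2*b+2) (by omega) (by omega),
        choose_cast (k+2*b+2) k (2*b+2) (by omega) (by omega),
        choose_cast (k+2*b+2) (k+1) (2*b+1) (by omega) (by omega),
        choose_cast (k+2*b+2) (k+2) (2*b) (by omega) (by omega),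
        choose_cast (2*b+2) (b+1) (b+1) (by omega) (by omega),
        choose_cast (2*b+1) b (b+1) (by omega) (by omega),
        choose_cast (2*b) b b (by omega) (by omega)]
    rw [fact_cast (k+2*b+2+1) (k+2*b+2) (by omega), fact_cast (2*b+2) (2*b+1) (by omega),
        fact_cast (2*b+1) (2*b) (by omega), fact_cast (k+2) (k+1) (by omega),
        fact_cast (k+1) k (by omega), fact_cast (b+1) b (by omega)]
    have h1 := fact_nz b
    have h2 := fact_nz (2*b)
    have h3 := fact_nz k
    have h4 := fact_nz (k+2*b+2)
    field_simp
    push_cast [Nat.choose_zero_right]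
    ring
  · -- m = 2b+3
    simp only [show k + (2*b+1+1+1) = k+2*b+3 from by omega,
      show 2*(k+2*b+3)+2-k = k+4*b+8 from by omega]
    rw [motzkinT_eval (k+2*b+3+1) (k+1) (2*b+3) (b+1) (by omega) (by omega),
        motzkinT_eval (k+2*b+3) k (2*b+3) (b+1) (by omega) (by omega),
        motzkinT_eval (k+2*b+3) (k+1) (2*b+2) (b+1) (by omega) (by omega),
        motzkinT_eval (k+2*b+3) (k+2) (2*b+1) b (by omega) (by omega)]
    push_cast
    rw [choose_cast (k+2*b+3+1) (k+1) (2*b+3) (by omega) (by omega),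
        choose_cast (k+2*b+3) k (2*b+3) (by omega) (by omega),
        choose_cast (k+2*b+3) (k+1) (2*b+2) (by omega) (by omega),
        choose_cast (k+2*b+3) (k+2) (2*b+1) (by omega) (by omega),
        choose_cast (2*b+3) (b+1) (b+2) (by omega) (by omega),
        choose_cast (2*b+2) (b+1) (b+1) (by omega) (by omega),
        choose_cast (2*b+1) b (b+1) (by omega) (by omega)]
    rw [fact_cast (k+2*b+3+1) (k+2*b+3) (by omega), fact_cast (2*b+3) (2*b+2) (by omega),
        fact_cast (2*b+2) (2*b+1) (by omega), fact_cast (2*b+1) (2*b) (by omega),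
        fact_cast (k+2) (k+1) (by omega), fact_cast (k+1) k (by omega),
        fact_cast (b+2) (b+1) (by omega), fact_cast (b+1) b (by omega)]
    have h1 := fact_nz b
    have h2 := fact_nz (2*b)
    have h3 := fact_nz k
    have h4 := fact_nz (k+2*b+3)
    field_simp
    push_cast [Nat.choose_zero_right]
    ring

abbrev R3 : Type := MvPolynomial (Fin 3) ℚ

lemma Dterm (D : Derivation ℚ R3 R3)
    (hu : D (X 1) = X 1 ^ 2 * X 2) (hv : D (X 2) = 4 * X 1 ^ 3) (n k : ℕ) (hk : k ≤ n) :
    D ((motzkinT n k : R3) * X 1 ^ (2*n+2-k) * X 2 ^ k)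
      = ((2*n+2-k : ℕ) : R3) * (motzkinT n k : R3) * X 1 ^ (2*n+3-k) * X 2 ^ (k+1)
        + 4 * (k : R3) * (motzkinT n k : R3) * X 1 ^ (2*n+5-k) * X 2 ^ (k-1) := by
  rw [Derivation.leibniz, Derivation.leibniz, Derivation.leibniz_pow, Derivation.leibniz_pow,
    Derivation.map_natCast, hu, hv]
  simp only [smul_eq_mul, nsmul_eq_mul, mul_zero, add_zero, zero_mul]
  rw [show 2*n+2-k-1 = 2*n+1-k from by omega,
      show 2*n+3-k = (2*n+1-k)+2 from by omega,
      show 2*n+5-k = (2*n+2-k)+3 from by omega,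
      pow_add, pow_add, pow_add]
  ring

lemma motzkinT_top (n j : ℕ) (h : n < j) : (motzkinT n j : R3) = 0 := by
  rw [motzkinT, Nat.choose_eq_zero_of_lt h]; simp


lemma key (D : Derivation ℚ R3 R3)
    (hu : D (X 1) = X 1 ^ 2 * X 2) (hv : D (X 2) = 4 * X 1 ^ 3) (n : ℕ) :
    ((n : R3) + 2) * ∑ k ∈ Finset.range (n + 2),
        (motzkinT (n+1) k : R3) * X 1 ^ (2*n+4-k) * X 2 ^ k
      = 2 * X 1 ^ 2 * ∑ k ∈ Finset.range (n + 1),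
          (motzkinT n k : R3) * X 1 ^ (2*n+2-k) * X 2 ^ k
        + D (∑ k ∈ Finset.range (n + 1), (motzkinT n k : R3) * X 1 ^ (2*n+2-k) * X 2 ^ k) := by
  -- compute D of the sum
  have hDsum : D (∑ k ∈ Finset.range (n + 1), (motzkinT n k : R3) * X 1 ^ (2*n+2-k) * X 2 ^ k)
      = ∑ k ∈ Finset.range (n + 1),
          (((2*n+2-k : ℕ) : R3) * (motzkinT n k : R3) * X 1 ^ (2*n+3-k) * X 2 ^ (k+1)
            + 4 * (k : R3) * (motzkinT n k : R3) * X 1 ^ (2*n+5-k) * X 2 ^ (k-1)) := by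
    rw [← Derivation.coeFn_coe D, map_sum]
    exact Finset.sum_congr rfl fun k hk => Dterm D hu hv n k (by simp at hk; omega)
  rw [hDsum, Finset.sum_add_distrib]
  -- P1
  have hP1 : 2 * X 1 ^ 2 * ∑ k ∈ Finset.range (n + 1),
        (motzkinT n k : R3) * X 1 ^ (2*n+2-k) * X 2 ^ k
      = ∑ j ∈ Finset.range (n + 2), 2 * (motzkinT n j : R3) * X 1 ^ (2*n+4-j) * X 2 ^ j := by
    rw [Finset.mul_sum, Finset.sum_range_succ _ (n+1), motzkinT_top n (n+1) (by omega)]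
    simp only [zero_mul, mul_zero, add_zero]
    refine Finset.sum_congr rfl fun k hk => ?_
    have hk' : k ≤ n := by simp at hk; omega
    rw [show 2*n+4-k = (2*n+2-k)+2 from by omega, pow_add]
    ring
  -- P2
  have hP2 : ∑ k ∈ Finset.range (n + 1),
        ((2*n+2-k : ℕ) : R3) * (motzkinT n k : R3) * X 1 ^ (2*n+3-k) * X 2 ^ (k+1)
      = ∑ j ∈ Finset.range (n + 2), (if j = 0 then 0 else
          ((2*n+3-j : ℕ) : R3) * (motzkinT n (j-1) : R3) * X 1 ^ (2*n+4-j) * X 2 ^ j) := by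
    rw [Finset.sum_range_succ' _ (n+1)]
    simp only [reduceIte, add_zero]
    refine Finset.sum_congr rfl fun k hk => ?_
    rw [if_neg (Nat.succ_ne_zero k), show 2*n+3-(k+1) = 2*n+2-k from by omega,
      show k+1-1 = k from by omega, show 2*n+4-(k+1) = 2*n+3-k from by omega]
  -- P3
  have hP3 : ∑ k ∈ Finset.range (n + 1),
        4 * (k : R3) * (motzkinT n k : R3) * X 1 ^ (2*n+5-k) * X 2 ^ (k-1)
      = ∑ j ∈ Finset.range (n + 2),
          4 * ((j : R3)+1) * (motzkinT n (j+1) : R3) * X 1 ^ (2*n+4-j) * X 2 ^ j := by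
    rw [Finset.sum_range_succ' _ n, Finset.sum_range_succ _ (n+1), Finset.sum_range_succ _ n,
      motzkinT_top n (n+1) (by omega), motzkinT_top n (n+2) (by omega)]
    simp only [Nat.cast_zero, mul_zero, zero_mul, add_zero, Nat.cast_succ]
    refine Finset.sum_congr rfl fun k hk => ?_
    rw [show 2*n+5-(k+1) = 2*n+4-k from by omega, show k+1-1 = k from by omega]
  rw [hP1, hP2, hP3, Finset.mul_sum, ← Finset.sum_add_distrib, ← Finset.sum_add_distrib]
  refine Finset.sum_congr rfl fun j hj => ?_
  have hj' : j ≤ n + 1 := by simp at hj; omega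
  rcases j with _ | k
  · have h := congrArg (⇑(MvPolynomial.C : ℚ →+* R3)) (rec0 n)
    simp only [map_add, map_mul, map_natCast, map_ofNat] at h
    simp only [Nat.sub_zero, pow_zero, mul_one, Nat.cast_zero, zero_add, reduceIte]
    linear_combination (X 1 ^ (2*n+4) : R3) * h
  · have h := congrArg (⇑(MvPolynomial.C : ℚ →+* R3)) (recS n k (by omega))
    simp only [map_add, map_mul, map_natCast, map_ofNat] at h
    rw [if_neg (Nat.succ_ne_zero k), show k+1-1 = k from by omega,
      show 2*n+3-(k+1) = 2*n+2-k from by omega, show 2*n+4-(k+1) = 2*n+3-k from by omega]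
    push_cast
    linear_combination (X 1 ^ (2*n+3-k) * X 2 ^ (k+1) : R3) * h

/-- Let `D` be the derivation on `ℚ[t,u,v]` with `D(t) = tu²`, `D(u) = u²v`,
`D(v) = 4u³` (here `t = X 0`, `u = X 1`, `v = X 2`).  Then for all `n ≥ 0`,
`D^n(t²u²) = (n+1)! t² Σ_{k=0}^{n} T(n,k) u^{2n+2−k} v^k`. -/
theorem derivation_t2u2_motzkin
    (D : Derivation ℚ (MvPolynomial (Fin 3) ℚ) (MvPolynomial (Fin 3) ℚ))
    (ht : D (X 0) = X 0 * X 1 ^ 2) (hu : D (X 1) = X 1 ^ 2 * X 2)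
    (hv : D (X 2) = 4 * X 1 ^ 3) (n : ℕ) :
    (⇑D)^[n] (X 0 ^ 2 * X 1 ^ 2) =
      ((n + 1).factorial : MvPolynomial (Fin 3) ℚ) * X 0 ^ 2 *
        ∑ k ∈ Finset.range (n + 1),
          (motzkinT n k : MvPolynomial (Fin 3) ℚ) * X 1 ^ (2 * n + 2 - k) * X 2 ^ k := by
  induction n with
  | zero =>
    simp [motzkinT, Nat.factorial]
  | succ n IH =>
    rw [Function.iterate_succ_apply', IH]
    have hD1 : D (((n+1).factorial : R3) * X 0 ^ 2 *
          ∑ k ∈ Finset.range (n + 1), (motzkinT n k : R3) * X 1 ^ (2*n+2-k) * X 2 ^ k)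
        = ((n+1).factorial : R3) * X 0 ^ 2 *
            (2 * X 1 ^ 2 * (∑ k ∈ Finset.range (n + 1),
               (motzkinT n k : R3) * X 1 ^ (2*n+2-k) * X 2 ^ k)
             + D (∑ k ∈ Finset.range (n + 1),
               (motzkinT n k : R3) * X 1 ^ (2*n+2-k) * X 2 ^ k)) := by
      rw [Derivation.leibniz, Derivation.leibniz, Derivation.leibniz_pow,
        Derivation.map_natCast, ht]
      simp only [smul_eq_mul, nsmul_eq_mul, mul_zero, add_zero, pow_one, Nat.cast_ofNat]
      ring
    rw [show (2 * n + 2 : ℕ) = 2 * n + 2 from rfl] at hD1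
    rw [hD1, ← key D hu hv n]
    have hsum : ∑ k ∈ Finset.range (n + 1 + 1),
          (motzkinT (n+1) k : R3) * X 1 ^ (2 * (n+1) + 2 - k) * X 2 ^ k
        = ∑ k ∈ Finset.range (n + 2), (motzkinT (n+1) k : R3) * X 1 ^ (2*n+4-k) * X 2 ^ k := by
      refine Finset.sum_congr rfl fun k hk => ?_
      rw [show 2*(n+1)+2-k = 2*n+4-k from by omega]
    rw [hsum]
    have hfac : ((n+1+1).factorial : R3) = ((n+1).factorial : R3) * ((n : R3) + 2) := by
      rw [Nat.factorial_succ]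
      push_cast
      ring
    rw [hfac]
    ring
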